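/- The operator identity P∘(S + R·id)⁻¹∘S∘(id − P_{*,R}) = 0 holds; consequently, for every r_ll ∈ H, the solution r_R = (S + R·id)⁻¹((S + R·P_{*,R}) r_ll) of the penalized normal equations decomposes as P r_R = P_{*,R} r_ll and (id − P) r_R = (S + R·id)⁻¹(S((id − P_{*,R}) r_ll)) (Proposition 3). -/

import Mathlib

open scoped RealInnerProductSpace

/-- Proposition 3: `P∘(S + R·id)⁻¹∘S∘(id − P_{*,R}) = 0`, and
consequently for every `r_ll ∈ H` the solution
`r_R = (S + R·id)⁻¹((S + R·P_{*,R}) r_ll)` of the penalized normal equations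
decomposes as `P r_R = P_{*,R} r_ll` and
`(id − P) r_R = (S + R·id)⁻¹(S((id − P_{*,R}) r_ll))`. -/
theorem proposition3_decomposition
    {H : Type*} [NormedAddCommGroup H] [InnerProductSpace ℝ H] [FiniteDimensional ℝ H]
    (S : Module.End ℝ H)
    (hS_sym : ∀ x y : H, ⟪S x, y⟫ = ⟪x, S y⟫)
    (hS_psd : ∀ x : H, 0 ≤ ⟪x, S x⟫)
    (V : Submodule ℝ H)
    (P : Module.End ℝ H) (hP : ∀ x : H, P x = (V.orthogonalProjection x : H))
    (R : ℝ) (hR : 0 < R)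
    (T : Module.End ℝ H)
    (hT1 : T * (S + R • 1) = 1) (hT2 : (S + R • 1) * T = 1)
    (Pstar : Module.End ℝ H)
    (hPstar_mem : ∀ r : H, Pstar r ∈ V)
    (hPstar_eq : ∀ r : H, P (T (S (Pstar r))) = P (T (S r)))
    (hΛ_inj : ∀ v ∈ V, ∀ w ∈ V, P (T (S v)) = P (T (S w)) → v = w) :
    P * T * S * (1 - Pstar) = 0 ∧
      ∀ r_ll : H,
        P (T ((S + R • Pstar) r_ll)) = Pstar r_ll ∧
          (1 - P) (T ((S + R • Pstar) r_ll)) = T (S ((1 - Pstar) r_ll)) := by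
  have hPfix : ∀ v ∈ V, P v = v := by
    intro v hv
    rw [hP]
    exact (Submodule.starProjection_eq_self_iff (K := V)).mpr hv
  have h0 : ∀ r : H, P (T (S ((1 - Pstar) r))) = 0 := by
    intro r
    have h1 : (1 - Pstar) r = r - Pstar r := by
      simp [LinearMap.sub_apply]
    rw [h1, map_sub, map_sub, map_sub, hPstar_eq, sub_self]
  refine ⟨?_, ?_⟩
  · ext r
    simpa [Module.End.mul_apply] using h0 r
  · intro r
    have hx : T (S (Pstar r) + R • Pstar r) = Pstar r := by
      have := congrArg (fun f : Module.End ℝ H => f (Pstar r)) hT1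
      simpa [Module.End.mul_apply, LinearMap.add_apply, LinearMap.smul_apply] using this
    have hTR : R • T (Pstar r) = Pstar r - T (S (Pstar r)) := by
      rw [map_add, map_smul] at hx
      rw [eq_sub_iff_add_eq, add_comm]
      exact hx
    have hdecomp : T ((S + R • Pstar) r) = Pstar r + T (S ((1 - Pstar) r)) := by
      have h1 : (S + R • Pstar) r = S r + R • Pstar r := by
        simp [LinearMap.add_apply, LinearMap.smul_apply]
      rw [h1, map_add, map_smul, hTR]
      have h2 : (1 - Pstar) r = r - Pstar r := by
        simp [LinearMap.sub_apply]
      rw [h2, map_sub, map_sub]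
      abel
    constructor
    · rw [hdecomp, map_add, h0 r, add_zero, hPfix _ (hPstar_mem r)]
    · have : (1 - P) (T ((S + R • Pstar) r)) = T ((S + R • Pstar) r) - P (T ((S + R • Pstar) r)) := by
        simp [LinearMap.sub_apply]
      rw [this, hdecomp, map_add, h0 r, add_zero, hPfix _ (hPstar_mem r)]
      abel
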